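/- If X is a star set for eigenvalue μ in a graph G and U is a proper subset of X, then X \ U is a star set for μ in the graph G \ U (the induced subgraph on V(G) \ U). -/

import Mathlib

open Matrix

open scoped Classical

noncomputable section

variable {V : Type*} [Fintype V] [DecidableEq V]

/-- The real adjacency matrix of a graph. -/
def adjMat (G : SimpleGraph V) : Matrix V V ℝ :=
  letI := Classical.decRel G.Adj
  G.adjMatrix ℝ

/-- `μ` is an (adjacency) eigenvalue of `G`. -/
def IsEigen (G : SimpleGraph V) (μ : ℝ) : Prop :=
  Module.End.HasEigenvalue (Matrix.toLin' (adjMat G)) μ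

/-- The multiplicity of `μ` as an eigenvalue of `G`. -/
def eigMult (G : SimpleGraph V) (μ : ℝ) : ℕ :=
  Module.finrank ℝ (Module.End.eigenspace (Matrix.toLin' (adjMat G)) μ)

/-- `X` is a star set for `μ` in `G`: `|X|` equals the multiplicity of `μ` and `μ` is
not an eigenvalue of `G - X`. -/
def IsStarSet (G : SimpleGraph V) (μ : ℝ) (X : Finset V) : Prop :=
  X.card = eigMult G μ ∧ ¬ IsEigen (G.induce ((↑X : Set V)ᶜ)) μ

/-- `μ` is a non-main eigenvalue: every `μ`-eigenvector is orthogonal to the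
all-ones vector. -/
def IsNonMain (G : SimpleGraph V) (μ : ℝ) : Prop :=
  ∀ x : V → ℝ, (adjMat G).mulVec x = μ • x → x ⬝ᵥ (fun _ => 1) = 0

section Aux

set_option linter.unusedSectionVars false

variable {W : Type*} [Fintype W] [DecidableEq W]

/-- The multiplicity of `μ` as an eigenvalue of a matrix. -/
def matMult (A : Matrix W W ℝ) (μ : ℝ) : ℕ :=
  Module.finrank ℝ (Module.End.eigenspace (Matrix.toLin' A) μ)

lemma mem_eig_iff (A : Matrix W W ℝ) (μ : ℝ) (x : W → ℝ) :
    x ∈ Module.End.eigenspace (Matrix.toLin' A) μ ↔ A.mulVec x = μ • x := by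
  rw [Module.End.mem_eigenspace_iff, Matrix.toLin'_apply]

lemma matMult_submatrix_ge (A : Matrix W W ℝ) (S : Finset W) (μ : ℝ) :
    matMult A μ ≤
      matMult (A.submatrix (Subtype.val : ((↑S : Set W)ᶜ : Set W) → W) Subtype.val) μ + S.card := by
  classical
  set E := Module.End.eigenspace (Matrix.toLin' A) μ with hE
  set B := A.submatrix (Subtype.val : ((↑S : Set W)ᶜ : Set W) → W) Subtype.val with hB
  set F := Module.End.eigenspace (Matrix.toLin' B) μ with hF
  -- φ : E →ₗ (S → ℝ)
  let φ : E →ₗ[ℝ] (↥S → ℝ) := (LinearMap.funLeft ℝ ℝ (Subtype.val : ↥S → W)).comp E.subtype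
  -- restriction map from ker φ to F
  have key : ∀ x : W → ℝ, x ∈ E → (∀ v : ↥S, x ↑v = 0) →
      (fun w : ((↑S : Set W)ᶜ : Set W) => x ↑w) ∈ F := by
    intro x hx hx0
    rw [hF, mem_eig_iff]
    have hx' : A.mulVec x = μ • x := (mem_eig_iff A μ x).mp hx
    funext w
    have : B.mulVec (fun w : ((↑S : Set W)ᶜ : Set W) => x ↑w) w = A.mulVec x ↑w := by
      simp only [Matrix.mulVec, dotProduct, hB, Matrix.submatrix_apply]
      rw [← Finset.sum_filter_add_sum_filter_not Finset.univ (fun u => u ∈ S)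
        (fun u => A (↑w) u * x u)]
      have h1 : ∑ u ∈ Finset.univ.filter (fun u => u ∈ S), A (↑w) u * x u = 0 := by
        apply Finset.sum_eq_zero
        intro u hu
        simp only [Finset.mem_filter] at hu
        rw [hx0 ⟨u, hu.2⟩, mul_zero]
      rw [h1, zero_add]
      rw [Finset.sum_subtype (Finset.univ.filter (fun u => ¬ u ∈ S))
        (p := fun u => u ∈ ((↑S : Set W)ᶜ : Set W)) (by simp) (fun u => A (↑w) u * x u)]
    rw [this, hx']
    simp
  set K := LinearMap.ker φ with hK
  let ρ : (W → ℝ) →ₗ[ℝ] (((↑S : Set W)ᶜ : Set W) → ℝ) :=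
    LinearMap.funLeft ℝ ℝ Subtype.val
  let ψ0 : K →ₗ[ℝ] (((↑S : Set W)ᶜ : Set W) → ℝ) := ρ.comp (E.subtype.comp K.subtype)
  have hψ0 : ∀ x : K, ψ0 x ∈ F := by
    intro x
    exact key ((x : E) : W → ℝ) ((x : E)).2 (fun v => congrFun (LinearMap.mem_ker.mp x.2) v)
  let ψ : K →ₗ[ℝ] F := ψ0.codRestrict F hψ0
  have hinj : Function.Injective ψ := by
    intro x y hxy
    have h : ∀ w : W, ((x : E) : W → ℝ) w = ((y : E) : W → ℝ) w := by
      intro w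
      by_cases hw : w ∈ S
      · have hx := congrFun (LinearMap.mem_ker.mp x.2) ⟨w, hw⟩
        have hy := congrFun (LinearMap.mem_ker.mp y.2) ⟨w, hw⟩
        simp only [φ, LinearMap.comp_apply, LinearMap.funLeft_apply, Submodule.coe_subtype,
          Pi.zero_apply] at hx hy
        rw [hx, hy]
      · have : (ψ x : ((↑S : Set W)ᶜ : Set W) → ℝ) ⟨w, hw⟩ =
            (ψ y : ((↑S : Set W)ᶜ : Set W) → ℝ) ⟨w, hw⟩ := by rw [hxy]
        exact this
    have : (x : E) = (y : E) := Subtype.ext (funext h)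
    exact Subtype.ext this
  have h1 : Module.finrank ℝ K ≤ Module.finrank ℝ F :=
    LinearMap.finrank_le_finrank_of_injective hinj
  have h2 : Module.finrank ℝ E ≤ Module.finrank ℝ K + S.card := by
    have := LinearMap.finrank_range_add_finrank_ker φ
    rw [← hK] at this
    have hr : Module.finrank ℝ (LinearMap.range φ) ≤ S.card := by
      calc Module.finrank ℝ (LinearMap.range φ) ≤ Module.finrank ℝ (↥S → ℝ) :=
            Submodule.finrank_le _
        _ = S.card := by simp [Module.finrank_fintype_fun_eq_card]
    omega
  calc matMult A μ = Module.finrank ℝ E := rfl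
    _ ≤ Module.finrank ℝ K + S.card := h2
    _ ≤ Module.finrank ℝ F + S.card := by omega

lemma mulVec_submatrix_equiv {Z : Type*} [Fintype Z] [DecidableEq Z]
    (A : Matrix W W ℝ) (e : Z ≃ W) (x : Z → ℝ) (w : Z) :
    (A.submatrix e e).mulVec x w = A.mulVec (x ∘ e.symm) (e w) := by
  simp only [Matrix.mulVec, dotProduct, Matrix.submatrix_apply]
  rw [← Equiv.sum_comp e (fun u => A (e w) u * (x ∘ e.symm) u)]
  simp

lemma mem_eig_equiv {Z : Type*} [Fintype Z] [DecidableEq Z]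
    (A : Matrix W W ℝ) (e : Z ≃ W) (x : Z → ℝ) (μ : ℝ) :
    x ∈ Module.End.eigenspace (Matrix.toLin' (A.submatrix e e)) μ ↔
      (x ∘ e.symm) ∈ Module.End.eigenspace (Matrix.toLin' A) μ := by
  rw [mem_eig_iff, mem_eig_iff]
  constructor
  · intro h
    funext w
    have := congrFun h (e.symm w)
    rw [mulVec_submatrix_equiv, e.apply_symm_apply] at this
    simpa using this
  · intro h
    funext w
    rw [mulVec_submatrix_equiv, congrFun h (e w)]
    simp

lemma matMult_submatrix_equiv {Z : Type*} [Fintype Z] [DecidableEq Z]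
    (A : Matrix W W ℝ) (e : Z ≃ W) (μ : ℝ) :
    matMult (A.submatrix e e) μ = matMult A μ := by
  unfold matMult
  apply LinearEquiv.finrank_eq
  exact Submodule.equivMapOfInjective (LinearMap.funLeft ℝ ℝ e.symm)
    (LinearMap.funLeft_injective_of_surjective ℝ ℝ _ e.symm.surjective) _ |>.trans
    (LinearEquiv.ofEq _ _ (by
      ext y
      simp only [Submodule.mem_map]
      constructor
      · rintro ⟨x, hx, rfl⟩
        exact (mem_eig_equiv A e x μ).mp hx
      · intro hy
        refine ⟨y ∘ e, ?_, ?_⟩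
        · rw [mem_eig_equiv]
          convert hy
          funext w; simp
        · funext w; simp [LinearMap.funLeft] ))

end Aux

set_option linter.unusedSectionVars false in
lemma adjMat_induce (G : SimpleGraph V) (s : Set V) :
    adjMat (G.induce s) = (adjMat G).submatrix (Subtype.val : s → V) Subtype.val := by
  ext a b
  simp [adjMat, SimpleGraph.adjMatrix_apply, Matrix.submatrix_apply]

lemma eigMult_eq_matMult (G : SimpleGraph V) (μ : ℝ) :
    eigMult G μ = matMult (adjMat G) μ := rfl

lemma isEigen_iff (G : SimpleGraph V) (μ : ℝ) : IsEigen G μ ↔ 0 < eigMult G μ := by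
  rw [IsEigen, Module.End.hasEigenvalue_iff, eigMult]
  rw [pos_iff_ne_zero]
  exact (not_congr Submodule.finrank_eq_zero).symm

/-- Lemma 2.3: if `X` is a star set for `μ` in `G` and `U ⊊ X`, then `X \ U` is a star
set for `μ` in `G \ U` (the induced subgraph on `V(G) \ U`). -/
theorem starSet_of_delete (G : SimpleGraph V) (μ : ℝ) (hμeig : IsEigen G μ)
    (X : Finset V) (hstar : IsStarSet G μ X) (U : Finset V) (hU : U ⊂ X) :
    IsStarSet (G.induce ((↑U : Set V)ᶜ)) μ
      (Finset.univ.filter (fun v : ((↑U : Set V)ᶜ : Set V) => ↑v ∈ X \ U)) := by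
  classical
  set s := ((↑U : Set V)ᶜ : Set V) with hs
  set T : Finset ↥s := Finset.univ.filter (fun v : ↥s => ↑v ∈ X \ U) with hT
  have hUX : U ⊆ X := hU.subset
  -- the equivalence between the twice-induced vertex set and Xᶜ
  have hmem : ∀ w : ↥s, w ∈ ((↑T : Set ↥s)ᶜ : Set ↥s) ↔ (↑w : V) ∉ X := by
    intro w
    have hwU : (↑w : V) ∉ U := fun h =>
      (w.2 : (↑w : V) ∈ ((↑U : Set V)ᶜ : Set V)) (Finset.mem_coe.mpr h)
    simp [hT, Finset.mem_filter, Finset.mem_sdiff, hwU]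
  let e : (((↑T : Set ↥s)ᶜ : Set ↥s)) ≃ ((↑X : Set V)ᶜ : Set V) :=
    { toFun := fun w => ⟨↑↑w, by simpa using (hmem ↑w).mp w.2⟩
      invFun := fun u => ⟨⟨↑u, fun h =>
          (u.2 : (↑u : V) ∈ ((↑X : Set V)ᶜ : Set V)) (Finset.mem_coe.mpr (hUX h))⟩, by
          rw [hmem]
          exact fun h => (u.2 : (↑u : V) ∈ ((↑X : Set V)ᶜ : Set V)) (Finset.mem_coe.mpr h)⟩
      left_inv := fun w => by ext; rfl
      right_inv := fun u => by ext; rfl }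
  -- matrix identification
  have hmat : adjMat ((G.induce s).induce ((↑T : Set ↥s)ᶜ)) =
      (adjMat (G.induce ((↑X : Set V)ᶜ))).submatrix e e := by
    ext a b
    simp only [adjMat, Matrix.submatrix_apply, SimpleGraph.adjMatrix_apply]
    exact if_congr (by simp [e]) rfl rfl
  -- multiplicity of the doubly-induced graph is that of G - X, namely 0
  have hzero : eigMult (G.induce ((↑X : Set V)ᶜ)) μ = 0 := by
    by_contra h
    exact hstar.2 ((isEigen_iff _ _).mpr (Nat.pos_of_ne_zero h))
  have hdouble : eigMult ((G.induce s).induce ((↑T : Set ↥s)ᶜ)) μ = 0 := by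
    rw [eigMult_eq_matMult, hmat, matMult_submatrix_equiv, ← eigMult_eq_matMult, hzero]
  -- card of T
  have hTcard : T.card = X.card - U.card := by
    have : T.card = (X \ U).card := by
      apply Finset.card_bij (fun (v : ↥s) (_ : v ∈ T) => (↑v : V))
      · intro a ha; simpa [hT] using (Finset.mem_filter.mp ha).2
      · intro a _ b _ h; exact Subtype.ext h
      · intro b hb
        have hbU : b ∉ U := (Finset.mem_sdiff.mp hb).2
        exact ⟨⟨b, by simpa [hs] using hbU⟩, by simpa [hT] using hb, rfl⟩
    rw [this, Finset.card_sdiff_of_subset hUX]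
  -- lower bound: eigMult G μ ≤ eigMult (G \ U) μ + |U|
  have hlow : eigMult G μ ≤ eigMult (G.induce s) μ + U.card := by
    have := matMult_submatrix_ge (adjMat G) U μ
    rwa [← adjMat_induce, ← eigMult_eq_matMult, ← eigMult_eq_matMult] at this
  -- upper bound: eigMult (G \ U) μ ≤ |T|
  have hhigh : eigMult (G.induce s) μ ≤ T.card := by
    have := matMult_submatrix_ge (adjMat (G.induce s)) T μ
    rw [← adjMat_induce, ← eigMult_eq_matMult, ← eigMult_eq_matMult, hdouble] at this
    simpa using this
  have hUcard : U.card ≤ X.card := Finset.card_le_card hUX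
  have hXcard : X.card = eigMult G μ := hstar.1
  constructor
  · show T.card = eigMult (G.induce s) μ
    omega
  · show ¬ IsEigen ((G.induce s).induce ((↑T : Set ↥s)ᶜ)) μ
    rw [isEigen_iff, hdouble]
    simp
end
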